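/- Let V be a real inner product space with 3 ≤ dim V < ∞, and let α₁, …, α₁₀ : [0, ∞) → ℝ be continuous functions. Suppose that for every y ∈ V and all x₁, x₂, x₃ ∈ V, writing t = ‖y‖²/2: α₁(t)⟨x₂,x₃⟩x₁ + α₂(t)⟨x₁,x₃⟩x₂ + α₃(t)⟨x₁,x₂⟩x₃ + α₄(t)⟨y,x₁⟩⟨y,x₂⟩x₃ + α₅(t)⟨y,x₁⟩⟨y,x₃⟩x₂ + α₆(t)⟨y,x₂⟩⟨y,x₃⟩x₁ + α₇(t)⟨x₂,x₃⟩⟨y,x₁⟩y + α₈(t)⟨x₁,x₃⟩⟨y,x₂⟩y + α₉(t)⟨x₁,x₂⟩⟨y,x₃⟩y + α₁₀(t)⟨y,x₁⟩⟨y,x₂⟩⟨y,x₃⟩y = 0. Then α₁, …, α₁₀ all vanish identically on [0, ∞). -/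

import Mathlib

open RealInnerProductSpace

private lemma zero_at_zero_aux {f : ℝ → ℝ} (hf : ContinuousOn f (Set.Ici 0))
    (h : ∀ t : ℝ, 0 < t → f t = 0) : f 0 = 0 := by
  have h1 : Filter.Tendsto f (nhdsWithin 0 (Set.Ioi 0)) (nhds (f 0)) :=
    (hf 0 Set.self_mem_Ici).mono_left (nhdsWithin_mono _ Set.Ioi_subset_Ici_self)
  have h2 : Filter.Tendsto f (nhdsWithin 0 (Set.Ioi 0)) (nhds 0) := by
    apply Filter.Tendsto.congr' _ tendsto_const_nhds
    filter_upwards [self_mem_nhdsWithin] with x hx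
    exact (h x hx).symm
  exact tendsto_nhds_unique h1 h2

set_option maxHeartbeats 1000000 in
/-- Lemma 2 of the paper (function form): if `α₁, …, α₁₀ : [0,∞) → ℝ` are continuous and
the displayed combination (with `t = ‖y‖²/2`) vanishes for all `y, x₁, x₂, x₃` in a real
inner product space `V` with `3 ≤ dim V < ∞`, then all ten functions vanish on `[0,∞)`. -/
theorem lemma2_functions {V : Type*} [NormedAddCommGroup V] [InnerProductSpace ℝ V]
    [FiniteDimensional ℝ V] (hdim : 3 ≤ Module.finrank ℝ V)
    (α₁ α₂ α₃ α₄ α₅ α₆ α₇ α₈ α₉ α₁₀ : ℝ → ℝ)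
    (h₁ : ContinuousOn α₁ (Set.Ici 0)) (h₂ : ContinuousOn α₂ (Set.Ici 0))
    (h₃ : ContinuousOn α₃ (Set.Ici 0)) (h₄ : ContinuousOn α₄ (Set.Ici 0))
    (h₅ : ContinuousOn α₅ (Set.Ici 0)) (h₆ : ContinuousOn α₆ (Set.Ici 0))
    (h₇ : ContinuousOn α₇ (Set.Ici 0)) (h₈ : ContinuousOn α₈ (Set.Ici 0))
    (h₉ : ContinuousOn α₉ (Set.Ici 0)) (h₁₀ : ContinuousOn α₁₀ (Set.Ici 0))
    (h : ∀ y x₁ x₂ x₃ : V,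
      (α₁ (‖y‖ ^ 2 / 2) * ⟪x₂, x₃⟫) • x₁ + (α₂ (‖y‖ ^ 2 / 2) * ⟪x₁, x₃⟫) • x₂ +
      (α₃ (‖y‖ ^ 2 / 2) * ⟪x₁, x₂⟫) • x₃ +
      (α₄ (‖y‖ ^ 2 / 2) * (⟪y, x₁⟫ * ⟪y, x₂⟫)) • x₃ +
      (α₅ (‖y‖ ^ 2 / 2) * (⟪y, x₁⟫ * ⟪y, x₃⟫)) • x₂ +
      (α₆ (‖y‖ ^ 2 / 2) * (⟪y, x₂⟫ * ⟪y, x₃⟫)) • x₁ +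
      (α₇ (‖y‖ ^ 2 / 2) * (⟪x₂, x₃⟫ * ⟪y, x₁⟫)) • y +
      (α₈ (‖y‖ ^ 2 / 2) * (⟪x₁, x₃⟫ * ⟪y, x₂⟫)) • y +
      (α₉ (‖y‖ ^ 2 / 2) * (⟪x₁, x₂⟫ * ⟪y, x₃⟫)) • y +
      (α₁₀ (‖y‖ ^ 2 / 2) * (⟪y, x₁⟫ * ⟪y, x₂⟫ * ⟪y, x₃⟫)) • y = 0) :
    ∀ t ∈ Set.Ici (0 : ℝ),
      α₁ t = 0 ∧ α₂ t = 0 ∧ α₃ t = 0 ∧ α₄ t = 0 ∧ α₅ t = 0 ∧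
      α₆ t = 0 ∧ α₇ t = 0 ∧ α₈ t = 0 ∧ α₉ t = 0 ∧ α₁₀ t = 0 := by
  have b := stdOrthonormalBasis ℝ V
  have hb : ∀ i j, ⟪b i, b j⟫ = if i = j then (1:ℝ) else 0 := orthonormal_iff_ite.mp b.orthonormal
  set e₁ := b ⟨0, by omega⟩ with he₁
  set e₂ := b ⟨1, by omega⟩ with he₂
  set e₃ := b ⟨2, by omega⟩ with he₃
  have h11 : ⟪e₁, e₁⟫ = (1:ℝ) := by rw [he₁, hb]; simp
  have h22 : ⟪e₂, e₂⟫ = (1:ℝ) := by rw [he₂, hb]; simp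
  have h33 : ⟪e₃, e₃⟫ = (1:ℝ) := by rw [he₃, hb]; simp
  have h12 : ⟪e₁, e₂⟫ = (0:ℝ) := by rw [he₁, he₂, hb]; simp
  have h13 : ⟪e₁, e₃⟫ = (0:ℝ) := by rw [he₁, he₃, hb]; simp
  have h21 : ⟪e₂, e₁⟫ = (0:ℝ) := by rw [he₂, he₁, hb]; simp
  have h23 : ⟪e₂, e₃⟫ = (0:ℝ) := by rw [he₂, he₃, hb]; simp
  have h31 : ⟪e₃, e₁⟫ = (0:ℝ) := by rw [he₃, he₁, hb]; simp
  have h32 : ⟪e₃, e₂⟫ = (0:ℝ) := by rw [he₃, he₂, hb]; simp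
  have key : ∀ t : ℝ, 0 ≤ t →
      (α₁ t = 0 ∧ α₂ t = 0 ∧ α₃ t = 0) ∧
      (0 < t → α₄ t = 0 ∧ α₅ t = 0 ∧ α₆ t = 0 ∧ α₇ t = 0 ∧ α₈ t = 0 ∧
        α₉ t = 0 ∧ α₁₀ t = 0) := by
    intro t ht
    set s := Real.sqrt (2*t) with hsdef
    have hs2 : s^2 = 2*t := Real.sq_sqrt (by linarith)
    have hss : s*s = 2*t := by nlinarith [hs2]
    set y := s • e₁ with hy
    have hy1 : ⟪y, e₁⟫ = s := by rw [hy, real_inner_smul_left, h11]; ring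
    have hy2 : ⟪y, e₂⟫ = (0:ℝ) := by rw [hy, real_inner_smul_left, h12]; ring
    have hy3 : ⟪y, e₃⟫ = (0:ℝ) := by rw [hy, real_inner_smul_left, h13]; ring
    have hty : ‖y‖ ^ 2 / 2 = t := by
      have h1 : ‖e₁‖ = 1 := b.orthonormal.1 _
      rw [hy, norm_smul, h1, mul_one, Real.norm_eq_abs, sq_abs, hs2]
      ring
    have H1 := congrArg (fun v => (⟪v, e₂⟫ : ℝ)) (h y e₂ e₃ e₃)
    have H2 := congrArg (fun v => (⟪v, e₂⟫ : ℝ)) (h y e₃ e₂ e₃)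
    have H3 := congrArg (fun v => (⟪v, e₂⟫ : ℝ)) (h y e₃ e₃ e₂)
    have H4 := congrArg (fun v => (⟪v, e₂⟫ : ℝ)) (h y e₁ e₁ e₂)
    have H5 := congrArg (fun v => (⟪v, e₂⟫ : ℝ)) (h y e₁ e₂ e₁)
    have H6 := congrArg (fun v => (⟪v, e₂⟫ : ℝ)) (h y e₂ e₁ e₁)
    have H7 := congrArg (fun v => (⟪v, e₁⟫ : ℝ)) (h y e₁ e₂ e₂)
    have H8 := congrArg (fun v => (⟪v, e₁⟫ : ℝ)) (h y e₂ e₁ e₂)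
    have H9 := congrArg (fun v => (⟪v, e₁⟫ : ℝ)) (h y e₂ e₂ e₁)
    have H10 := congrArg (fun v => (⟪v, e₁⟫ : ℝ)) (h y e₁ e₁ e₁)
    simp only [inner_add_left, real_inner_smul_left, hty, h11, h22, h33, h12, h13,
      h21, h23, h31, h32, hy1, hy2, hy3, inner_zero_left] at H1 H2 H3 H4 H5 H6 H7 H8 H9 H10
    have hA1 : α₁ t = 0 := by linarith
    have hA2 : α₂ t = 0 := by linarith
    have hA3 : α₃ t = 0 := by linarith
    refine ⟨⟨hA1, hA2, hA3⟩, fun htpos => ?_⟩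
    have h2t : (2:ℝ)*t ≠ 0 := by positivity
    have hA4 : α₄ t = 0 := by
      have : α₄ t * (2*t) = 0 := by rw [← hss]; linarith
      exact (mul_eq_zero.mp this).resolve_right h2t
    have hA5 : α₅ t = 0 := by
      have : α₅ t * (2*t) = 0 := by rw [← hss]; linarith
      exact (mul_eq_zero.mp this).resolve_right h2t
    have hA6 : α₆ t = 0 := by
      have : α₆ t * (2*t) = 0 := by rw [← hss]; linarith
      exact (mul_eq_zero.mp this).resolve_right h2t
    have hA7 : α₇ t = 0 := by
      have : α₇ t * (2*t) = 0 := by rw [← hss]; linarith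
      exact (mul_eq_zero.mp this).resolve_right h2t
    have hA8 : α₈ t = 0 := by
      have : α₈ t * (2*t) = 0 := by rw [← hss]; linarith
      exact (mul_eq_zero.mp this).resolve_right h2t
    have hA9 : α₉ t = 0 := by
      have : α₉ t * (2*t) = 0 := by rw [← hss]; linarith
      exact (mul_eq_zero.mp this).resolve_right h2t
    have hA10 : α₁₀ t = 0 := by
      have h4t : (2*t)*(2*t) ≠ 0 := mul_ne_zero h2t h2t
      have : α₁₀ t * ((2*t)*(2*t)) = 0 := by
        linear_combination H10 - hA1 - hA2 - hA3 - (s*s)*hA4 - (s*s)*hA5 - (s*s)*hA6 -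
          (s*s)*hA7 - (s*s)*hA8 - (s*s)*hA9 - (α₁₀ t * (s*s + 2*t)) * hss
      exact (mul_eq_zero.mp this).resolve_right h4t
    exact ⟨hA4, hA5, hA6, hA7, hA8, hA9, hA10⟩
  intro t ht
  rcases eq_or_lt_of_le (Set.mem_Ici.mp ht) with h0 | h0
  · subst h0
    obtain ⟨⟨a1, a2, a3⟩, -⟩ := key 0 le_rfl
    refine ⟨a1, a2, a3, ?_, ?_, ?_, ?_, ?_, ?_, ?_⟩
    · exact zero_at_zero_aux h₄ (fun u hu => ((key u hu.le).2 hu).1)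
    · exact zero_at_zero_aux h₅ (fun u hu => ((key u hu.le).2 hu).2.1)
    · exact zero_at_zero_aux h₆ (fun u hu => ((key u hu.le).2 hu).2.2.1)
    · exact zero_at_zero_aux h₇ (fun u hu => ((key u hu.le).2 hu).2.2.2.1)
    · exact zero_at_zero_aux h₈ (fun u hu => ((key u hu.le).2 hu).2.2.2.2.1)
    · exact zero_at_zero_aux h₉ (fun u hu => ((key u hu.le).2 hu).2.2.2.2.2.1)
    · exact zero_at_zero_aux h₁₀ (fun u hu => ((key u hu.le).2 hu).2.2.2.2.2.2)
  · obtain ⟨⟨a1, a2, a3⟩, rest⟩ := key t ht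
    obtain ⟨a4, a5, a6, a7, a8, a9, a10⟩ := rest h0
    exact ⟨a1, a2, a3, a4, a5, a6, a7, a8, a9, a10⟩
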